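/- Let Φ be an irreducible root system inside R(V) (for V ⊆ N as above) of rank ≥ 2. If Φ contains a simple root of type 1 (squared length 1), then Φ is of type B. -/

import Mathlib

open Finset

/-- The natural pairing of a functional `a ∈ N* = Hom(ℤ^n, ℤ)` (represented by its
coordinate vector) with `x ∈ N = ℤ^n`. -/
def pairZ {n : ℕ} (a x : Fin n → ℤ) : ℤ := ∑ j, a j * x j

/-- The bilinear form `(α,β) = Σ_i ⟨α,v_i⟩⟨β,v_i⟩` on `N*`. -/
def formV {n m : ℕ} (v : Fin m → Fin n → ℤ) (a b : Fin n → ℤ) : ℤ :=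
  ∑ i, pairZ a (v i) * pairZ b (v i)

/-- Type 1 element: `|⟨α,v_i⟩| = 1` for some `i` and `⟨α,v_k⟩ = 0` for `k ≠ i`. -/
def IsType1 {n m : ℕ} (v : Fin m → Fin n → ℤ) (a : Fin n → ℤ) : Prop :=
  ∃ i, (pairZ a (v i) = 1 ∨ pairZ a (v i) = -1) ∧ ∀ k, k ≠ i → pairZ a (v k) = 0

/-- Type 2 element: `|⟨α,v_i⟩| = |⟨α,v_j⟩| = 1` for some `i ≠ j` and `⟨α,v_k⟩ = 0`
for `k ≠ i, j`. -/
def IsType2 {n m : ℕ} (v : Fin m → Fin n → ℤ) (a : Fin n → ℤ) : Prop :=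
  ∃ i j, i ≠ j ∧ (pairZ a (v i) = 1 ∨ pairZ a (v i) = -1) ∧
    (pairZ a (v j) = 1 ∨ pairZ a (v j) = -1) ∧
    ∀ k, k ≠ i → k ≠ j → pairZ a (v k) = 0

/-- The root system `R(V)` associated to the finite set `V = {v_i}`. -/
def RV {n m : ℕ} (v : Fin m → Fin n → ℤ) : Set (Fin n → ℤ) :=
  {a | IsType1 v a ∨ IsType2 v a}

/-- `Φ` is a subsystem of the set of roots `S`: it is contained in `S` and closed
under the reflections `r_a(b) = b − (2(b,a)/(a,a))·a` in its own elements. -/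
def IsRootSubsystem {n m : ℕ} (v : Fin m → Fin n → ℤ)
    (S Φ : Set (Fin n → ℤ)) : Prop :=
  Φ ⊆ S ∧ ∀ a ∈ Φ, ∀ b ∈ Φ, b - ((2 * formV v b a) / formV v a a) • a ∈ Φ

/-- `Δ` is a base (set of simple roots) of `Φ`: a linearly independent subset such
that every root of `Φ` is a nonnegative or nonpositive integral combination of `Δ`. -/
def IsBase {n m : ℕ} (v : Fin m → Fin n → ℤ)
    (Φ : Set (Fin n → ℤ)) (Δ : Finset (Fin n → ℤ)) : Prop :=
  ↑Δ ⊆ Φ ∧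
  LinearIndependent ℚ (fun a : Δ => (fun j => ((a : Fin n → ℤ) j : ℚ) : Fin n → ℚ)) ∧
  ∀ b ∈ Φ, (∃ c : (Fin n → ℤ) → ℕ, b = ∑ a ∈ Δ, (c a : ℤ) • a) ∨
    (∃ c : (Fin n → ℤ) → ℕ, b = -∑ a ∈ Δ, (c a : ℤ) • a)

/-- `Φ` is irreducible: nonempty and not a union of two nonempty mutually
orthogonal parts. -/
def IsIrred {n m : ℕ} (v : Fin m → Fin n → ℤ) (Φ : Set (Fin n → ℤ)) : Prop :=
  Φ.Nonempty ∧ ∀ Φ₁ Φ₂ : Set (Fin n → ℤ), Φ = Φ₁ ∪ Φ₂ →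
    (∀ a ∈ Φ₁, ∀ b ∈ Φ₂, formV v a b = 0) → Φ₁ = ∅ ∨ Φ₂ = ∅

/-- Gram matrix of the simple roots of `A_ℓ` (all roots of squared length 2,
simple roots forming a chain). -/
def gramA (ℓ : ℕ) (i j : Fin ℓ) : ℤ :=
  if i = j then 2
  else if (i : ℕ) + 1 = j ∨ (j : ℕ) + 1 = i then -1 else 0

/-- Gram matrix of the simple roots of `B_ℓ` (chain with a short simple root of
squared length 1 at the end). -/
def gramB (ℓ : ℕ) (i j : Fin ℓ) : ℤ :=
  if i = j then (if (i : ℕ) = ℓ - 1 then 1 else 2)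
  else if (i : ℕ) + 1 = j ∨ (j : ℕ) + 1 = i then -1 else 0

/-- Gram matrix of the simple roots of `D_ℓ` (chain `0, …, ℓ−2` with the extra node
`ℓ−1` attached to node `ℓ−3`). -/
def gramD (ℓ : ℕ) (i j : Fin ℓ) : ℤ :=
  if i = j then 2
  else if ((i : ℕ) + 1 = j ∧ (j : ℕ) ≤ ℓ - 2) ∨ ((j : ℕ) + 1 = i ∧ (i : ℕ) ≤ ℓ - 2) ∨
      ((i : ℕ) = ℓ - 3 ∧ (j : ℕ) = ℓ - 1) ∨ ((j : ℕ) = ℓ - 3 ∧ (i : ℕ) = ℓ - 1) then -1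
  else 0

/-- Gram matrix of the simple roots of `E_ℓ` (`ℓ = 6, 7, 8`): chain `0, …, ℓ−2`
with the extra node `ℓ−1` attached to node `2`. -/
def gramE (ℓ : ℕ) (i j : Fin ℓ) : ℤ :=
  if i = j then 2
  else if ((i : ℕ) + 1 = j ∧ (j : ℕ) ≤ ℓ - 2) ∨ ((j : ℕ) + 1 = i ∧ (i : ℕ) ≤ ℓ - 2) ∨
      ((i : ℕ) = 2 ∧ (j : ℕ) = ℓ - 1) ∨ ((j : ℕ) = 2 ∧ (i : ℕ) = ℓ - 1) then -1
  else 0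

/-- The set of simple roots `Δ` realizes the Gram matrix `g` under some
enumeration. -/
def MatchesGram {n m : ℕ} (v : Fin m → Fin n → ℤ) (Δ : Finset (Fin n → ℤ))
    (ℓ : ℕ) (g : Fin ℓ → Fin ℓ → ℤ) : Prop :=
  ∃ e : Fin ℓ → Fin n → ℤ, Function.Injective e ∧ (∀ i, e i ∈ Δ) ∧
    (∀ a ∈ Δ, ∃ i, e i = a) ∧ ∀ i j, formV v (e i) (e j) = g i j

def IsTypeA {n m : ℕ} (v : Fin m → Fin n → ℤ) (Δ : Finset (Fin n → ℤ)) : Prop :=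
  ∃ ℓ, MatchesGram v Δ ℓ (gramA ℓ)

def IsTypeB {n m : ℕ} (v : Fin m → Fin n → ℤ) (Δ : Finset (Fin n → ℤ)) : Prop :=
  ∃ ℓ, MatchesGram v Δ ℓ (gramB ℓ)

def IsTypeD {n m : ℕ} (v : Fin m → Fin n → ℤ) (Δ : Finset (Fin n → ℤ)) : Prop :=
  ∃ ℓ, 4 ≤ ℓ ∧ MatchesGram v Δ ℓ (gramD ℓ)

def IsTypeE {n m : ℕ} (v : Fin m → Fin n → ℤ) (Δ : Finset (Fin n → ℤ)) : Prop :=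
  ∃ ℓ, (ℓ = 6 ∨ ℓ = 7 ∨ ℓ = 8) ∧ MatchesGram v Δ ℓ (gramE ℓ)

section Layer0

variable {n m : ℕ} (v : Fin m → Fin n → ℤ)

/-- dot product on `ℤ^m`. -/
def dotm {m : ℕ} (u u' : Fin m → ℤ) : ℤ := ∑ i, u i * u' i

/-- the embedding `N* → ℤ^m`. -/
def wmap (a : Fin n → ℤ) : Fin m → ℤ := fun i => pairZ a (v i)

lemma formV_eq_dot (a b : Fin n → ℤ) : formV v a b = dotm (wmap v a) (wmap v b) := rfl

lemma dotm_comm (u u' : Fin m → ℤ) : dotm u u' = dotm u' u := by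
  unfold dotm; exact Finset.sum_congr rfl fun i _ => mul_comm _ _

lemma dotm_nonneg (u : Fin m → ℤ) : 0 ≤ dotm u u :=
  Finset.sum_nonneg fun i _ => mul_self_nonneg _

lemma dotm_self_eq_zero {u : Fin m → ℤ} (h : dotm u u = 0) : u = 0 := by
  have := (Finset.sum_eq_zero_iff_of_nonneg (fun i _ => mul_self_nonneg (u i))).mp h
  funext i
  have := this i (Finset.mem_univ i)
  have : u i = 0 := by nlinarith [this]
  simpa using this

lemma dotm_pos {u : Fin m → ℤ} (h : u ≠ 0) : 1 ≤ dotm u u := by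
  rcases lt_or_eq_of_le (dotm_nonneg u) with h1 | h2
  · omega
  · exact absurd (dotm_self_eq_zero h2.symm) h

lemma dotm_add_left (u w x : Fin m → ℤ) : dotm (u + w) x = dotm u x + dotm w x := by
  unfold dotm
  rw [← Finset.sum_add_distrib]
  exact Finset.sum_congr rfl fun i _ => by simp [add_mul]

lemma dotm_add_right (u w x : Fin m → ℤ) : dotm x (u + w) = dotm x u + dotm x w := by
  rw [dotm_comm, dotm_add_left, dotm_comm u x, dotm_comm w x]

lemma dotm_smul_left (c : ℤ) (u x : Fin m → ℤ) : dotm (c • u) x = c * dotm u x := by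
  unfold dotm
  rw [Finset.mul_sum]
  exact Finset.sum_congr rfl fun i _ => by simp [mul_assoc]

lemma dotm_smul_right (c : ℤ) (u x : Fin m → ℤ) : dotm x (c • u) = c * dotm x u := by
  rw [dotm_comm, dotm_smul_left, dotm_comm]

lemma dotm_sub_left (u w x : Fin m → ℤ) : dotm (u - w) x = dotm u x - dotm w x := by
  have h : u - w = u + (-1 : ℤ) • w := by
    funext i; simp; ring
  rw [h, dotm_add_left, dotm_smul_left]; ring

lemma dotm_sum_left {ι : Type*} (s : Finset ι) (g : ι → Fin m → ℤ) (x : Fin m → ℤ) :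
    dotm (∑ i ∈ s, g i) x = ∑ i ∈ s, dotm (g i) x := by
  classical
  induction s using Finset.induction with
  | empty => simp [dotm]
  | @insert i s hni ih =>
    rw [Finset.sum_insert hni, Finset.sum_insert hni, dotm_add_left, ih]

end Layer0

section Layer1

variable {n m : ℕ} (v : Fin m → Fin n → ℤ)

lemma pairZ_add_left (a b x : Fin n → ℤ) : pairZ (a + b) x = pairZ a x + pairZ b x := by
  unfold pairZ; rw [← Finset.sum_add_distrib]
  exact Finset.sum_congr rfl fun j _ => by simp [add_mul]

lemma pairZ_smul_left (c : ℤ) (a x : Fin n → ℤ) : pairZ (c • a) x = c * pairZ a x := by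
  unfold pairZ; rw [Finset.mul_sum]
  exact Finset.sum_congr rfl fun j _ => by simp [mul_assoc]

lemma pairZ_add_right (a x y : Fin n → ℤ) : pairZ a (x + y) = pairZ a x + pairZ a y := by
  unfold pairZ; rw [← Finset.sum_add_distrib]
  exact Finset.sum_congr rfl fun j _ => by simp [mul_add]

lemma pairZ_smul_right (c : ℤ) (a x : Fin n → ℤ) : pairZ a (c • x) = c * pairZ a x := by
  unfold pairZ; rw [Finset.mul_sum]
  exact Finset.sum_congr rfl fun j _ => by simp; ring

lemma pairZ_zero_right (a : Fin n → ℤ) : pairZ a 0 = 0 := by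
  unfold pairZ; simp

lemma wmap_add (a b : Fin n → ℤ) : wmap v (a + b) = wmap v a + wmap v b := by
  funext i; exact pairZ_add_left a b (v i)

lemma wmap_smul (c : ℤ) (a : Fin n → ℤ) : wmap v (c • a) = c • wmap v a := by
  funext i; exact pairZ_smul_left c a (v i)

lemma wmap_zero : wmap v (0 : Fin n → ℤ) = 0 := by
  funext i; simp [wmap, pairZ]

lemma wmap_sub (a b : Fin n → ℤ) : wmap v (a - b) = wmap v a - wmap v b := by
  have h : a - b = a + (-1 : ℤ) • b := by funext j; simp; ring
  rw [h, wmap_add, wmap_smul]; funext i; simp; ring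

lemma wmap_sum {ι : Type*} (s : Finset ι) (g : ι → Fin n → ℤ) :
    wmap v (∑ i ∈ s, g i) = ∑ i ∈ s, wmap v (g i) := by
  classical
  induction s using Finset.induction with
  | empty => simpa using wmap_zero v
  | @insert i s hni ih =>
    rw [Finset.sum_insert hni, Finset.sum_insert hni, wmap_add, ih]

/-- formV bilinearity lemmas -/
lemma formV_comm (a b : Fin n → ℤ) : formV v a b = formV v b a := by
  rw [formV_eq_dot, formV_eq_dot, dotm_comm]

lemma formV_sub_left (a b x : Fin n → ℤ) : formV v (a - b) x = formV v a x - formV v b x := by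
  rw [formV_eq_dot, formV_eq_dot, formV_eq_dot, wmap_sub, dotm_sub_left]

lemma formV_smul_left (c : ℤ) (a x : Fin n → ℤ) : formV v (c • a) x = c * formV v a x := by
  rw [formV_eq_dot, formV_eq_dot, wmap_smul, dotm_smul_left]

lemma formV_sum_left {ι : Type*} (s : Finset ι) (g : ι → Fin n → ℤ) (x : Fin n → ℤ) :
    formV v (∑ i ∈ s, g i) x = ∑ i ∈ s, formV v (g i) x := by
  rw [formV_eq_dot, wmap_sum, dotm_sum_left]
  exact Finset.sum_congr rfl fun i _ => (formV_eq_dot v (g i) x).symm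

/-- Injectivity of the embedding, from full rank. -/
lemma winj (hv : Module.finrank ℤ (Submodule.span ℤ (Set.range v)) = n)
    {a : Fin n → ℤ} (ha : wmap v a = 0) : a = 0 := by
  classical
  set K := Submodule.span ℤ (Set.range v) with hK
  obtain ⟨k, bk⟩ := Submodule.basisOfPid (Pi.basisFun ℤ (Fin n)) K
  have hkn : n = k := by
    have := Module.finrank_eq_card_basis bk
    simp [hv] at this
    omega
  subst hkn
  -- the rows
  set x : Fin n → Fin n → ℤ := fun i => ((bk i : K) : Fin n → ℤ) with hx
  have hxK : ∀ i, (x i) ∈ K := fun i => (bk i).2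
  have hli : LinearIndependent ℤ x := by
    have := bk.linearIndependent.map' K.subtype K.ker_subtype
    exact this
  set M : Matrix (Fin n) (Fin n) ℤ := Matrix.of (fun i j => x i j) with hM
  have hdet : M.det ≠ 0 := by
    intro h0
    obtain ⟨c, hc0, hc⟩ := Matrix.exists_vecMul_eq_zero_iff.mpr h0
    have : ∑ i, c i • x i = 0 := by
      funext j
      have := congrFun hc j
      simpa [Matrix.vecMul, dotProduct, hM] using this
    have := Fintype.linearIndependent_iff.mp hli c this
    exact hc0 (funext this)
  -- a pairs to zero with everything in K
  have hpair : ∀ u ∈ K, pairZ a u = 0 := by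
    intro u hu
    induction hu using Submodule.span_induction with
    | mem y hy =>
      obtain ⟨i, rfl⟩ := hy
      exact congrFun ha i
    | zero => exact pairZ_zero_right a
    | add y z _ _ h1 h2 => rw [pairZ_add_right, h1, h2]; ring
    | smul c y _ h1 => rw [pairZ_smul_right, h1]; ring
  have hMa : M.mulVec a = 0 := by
    funext i
    have := hpair (x i) (hxK i)
    rw [show pairZ a (x i) = ∑ j, a j * x i j from rfl] at this
    simp only [Matrix.mulVec, dotProduct, hM, Matrix.of_apply, Pi.zero_apply]
    rw [← this]
    exact Finset.sum_congr rfl fun j _ => mul_comm _ _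
  by_contra hne
  exact hdet (Matrix.exists_mulVec_eq_zero_iff.mp ⟨a, hne, hMa⟩)

end Layer1

section Layer2

variable {n m : ℕ} (v : Fin m → Fin n → ℤ)

lemma normRV {a : Fin n → ℤ} (h : a ∈ RV v) : formV v a a = 1 ∨ formV v a a = 2 := by
  rcases h with ⟨i, hpm, h0⟩ | ⟨i, j, hij, hpi, hpj, h0⟩
  · left
    unfold formV
    rw [Finset.sum_eq_single i]
    · rcases hpm with h | h <;> rw [h] <;> ring
    · intro k _ hk; rw [h0 k hk]; ring
    · intro h; exact absurd (Finset.mem_univ i) h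
  · right
    unfold formV
    have hsub : ({i, j} : Finset (Fin m)) ⊆ Finset.univ := Finset.subset_univ _
    rw [← Finset.sum_subset hsub]
    · rw [Finset.sum_pair hij]
      rcases hpi with h | h <;> rcases hpj with h' | h' <;> rw [h, h'] <;> ring
    · intro k _ hk
      simp only [Finset.mem_insert, Finset.mem_singleton] at hk
      push_neg at hk
      rw [h0 k hk.1 hk.2]; ring

lemma gramB_one (i j : Fin 1) : gramB 1 i j = 1 := by
  have : i = j := Subsingleton.elim i j
  subst this
  have : (i : ℕ) = 0 := by omega
  simp [gramB, this]

lemma gramB_zero_zero {ℓ' : ℕ} (h : 1 ≤ ℓ') : gramB (ℓ' + 1) 0 0 = 2 := by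
  have h0 : ((0 : Fin (ℓ' + 1)) : ℕ) = 0 := rfl
  simp [gramB, h0]
  omega

lemma gramB_zero_succ {ℓ' : ℕ} (k : Fin ℓ') :
    gramB (ℓ' + 1) 0 k.succ = if (k : ℕ) = 0 then -1 else 0 := by
  have h1 : (0 : Fin (ℓ' + 1)) ≠ k.succ := (Fin.succ_ne_zero k).symm
  have h2 : ((0 : Fin (ℓ' + 1)) : ℕ) = 0 := rfl
  have h3 : ((k.succ : Fin (ℓ' + 1)) : ℕ) = (k : ℕ) + 1 := rfl
  simp only [gramB, if_neg h1, h2, h3]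
  by_cases h : (k : ℕ) = 0
  · rw [if_pos (by omega), if_pos h]
  · rw [if_neg (by omega), if_neg h]

lemma gramB_succ_zero {ℓ' : ℕ} (k : Fin ℓ') :
    gramB (ℓ' + 1) k.succ 0 = if (k : ℕ) = 0 then -1 else 0 := by
  have h1 : k.succ ≠ (0 : Fin (ℓ' + 1)) := Fin.succ_ne_zero k
  have h2 : ((0 : Fin (ℓ' + 1)) : ℕ) = 0 := rfl
  have h3 : ((k.succ : Fin (ℓ' + 1)) : ℕ) = (k : ℕ) + 1 := rfl
  simp only [gramB, if_neg h1, h2, h3]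
  by_cases h : (k : ℕ) = 0
  · rw [if_pos (by omega), if_pos h]
  · rw [if_neg (by omega), if_neg h]

lemma gramB_succ_succ {ℓ' : ℕ} (k j : Fin ℓ') :
    gramB (ℓ' + 1) k.succ j.succ = gramB ℓ' k j := by
  have h3 : ∀ x : Fin ℓ', ((x.succ : Fin (ℓ' + 1)) : ℕ) = (x : ℕ) + 1 := fun x => rfl
  have hk : (k : ℕ) < ℓ' := k.isLt
  have hj : (j : ℕ) < ℓ' := j.isLt
  simp only [gramB, h3]
  by_cases h : k = j
  · subst h
    rw [if_pos rfl, if_pos rfl]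
    by_cases h2 : (k : ℕ) = ℓ' - 1
    · rw [if_pos (by omega), if_pos h2]
    · rw [if_neg (by omega), if_neg h2]
  · rw [if_neg (by simp [Fin.succ_inj, h]), if_neg h]
    by_cases h2 : (k : ℕ) + 1 = (j : ℕ) ∨ (j : ℕ) + 1 = (k : ℕ)
    · rw [if_pos (by omega), if_pos h2]
    · rw [if_neg (by omega), if_neg h2]

end Layer2

section Layer3

variable {n m : ℕ} {v : Fin m → Fin n → ℤ} {Φ : Set (Fin n → ℤ)} {Δ : Finset (Fin n → ℤ)}

lemma formV_add_left (a b x : Fin n → ℤ) : formV v (a + b) x = formV v a x + formV v b x := by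
  rw [formV_eq_dot, formV_eq_dot, formV_eq_dot, wmap_add, dotm_add_left]

lemma formV_neg_left (a x : Fin n → ℤ) : formV v (-a) x = -formV v a x := by
  have h : (-a) = a - a - a := by abel
  rw [h, formV_sub_left, formV_sub_left]; ring

lemma formV_self_nonneg (a : Fin n → ℤ) : 0 ≤ formV v a a := by
  rw [formV_eq_dot]; exact dotm_nonneg _

lemma formV_self_pos (hv : Module.finrank ℤ (Submodule.span ℤ (Set.range v)) = n)
    {a : Fin n → ℤ} (ha : a ≠ 0) : 1 ≤ formV v a a := by
  rw [formV_eq_dot]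
  apply dotm_pos
  intro h
  exact ha (winj v hv h)

/-- sum of a single-point indicator -/
lemma sum_ite_smul {U : Finset (Fin n → ℤ)} (d : Fin n → ℤ) (hd : d ∈ U) (t : ℤ) :
    ∑ x ∈ U, (if x = d then t else 0) • x = t • d := by
  classical
  have : ∀ x ∈ U, (if x = d then t else 0) • x = (if x = d then t • x else 0) := by
    intro x _
    by_cases h : x = d <;> simp [h]
  rw [Finset.sum_congr rfl this, Finset.sum_ite_eq' U d (fun x => t • x), if_pos hd]

/-- uniqueness of coordinates w.r.t. Δ -/
lemma uniqCoeff
    (hli : LinearIndependent ℚ (fun a : Δ => (fun j => ((a : Fin n → ℤ) j : ℚ) : Fin n → ℚ)))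
    (p q : (Fin n → ℤ) → ℤ) (h : ∑ a ∈ Δ, p a • a = ∑ a ∈ Δ, q a • a) :
    ∀ a ∈ Δ, p a = q a := by
  classical
  have hz : ∑ a ∈ Δ, (p a - q a) • a = 0 := by
    have : ∀ a ∈ Δ, (p a - q a) • a = p a • a - q a • a := fun a _ => sub_smul _ _ _
    rw [Finset.sum_congr rfl this, Finset.sum_sub_distrib, h, sub_self]
  have key : ∀ x : ↥Δ, ((p ↑x - q ↑x : ℤ) : ℚ) = 0 := by
    apply Fintype.linearIndependent_iff.mp hli (fun x : ↥Δ => ((p ↑x - q ↑x : ℤ) : ℚ))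
    funext j
    have hzj : ∑ a ∈ Δ, (p a - q a) * a j = 0 := by
      have := congrFun hz j
      simpa [Finset.sum_apply] using this
    have : ∑ a ∈ Δ, (((p a - q a : ℤ) : ℚ) * ((a j : ℤ) : ℚ)) = 0 := by
      exact_mod_cast congrArg (fun z : ℤ => (z : ℚ)) hzj
    calc (∑ x : ↥Δ, ((p ↑x - q ↑x : ℤ) : ℚ) • (fun j' => ((↑x : Fin n → ℤ) j' : ℚ) : Fin n → ℚ)) j
        = ∑ x : ↥Δ, ((p ↑x - q ↑x : ℤ) : ℚ) * ((↑x : Fin n → ℤ) j : ℚ) := by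
          simp [Finset.sum_apply]
      _ = ∑ a ∈ Δ, (((p a - q a : ℤ) : ℚ) * ((a j : ℤ) : ℚ)) := by
          rw [← Finset.sum_coe_sort Δ (fun a => ((p a - q a : ℤ) : ℚ) * ((a j : ℤ) : ℚ))]
      _ = 0 := this
      _ = (0 : Fin n → ℚ) j := rfl
  intro a ha
  have := key ⟨a, ha⟩
  have : ((p a - q a : ℤ) : ℚ) = 0 := this
  have : (p a - q a : ℤ) = 0 := by exact_mod_cast this
  omega

lemma negMem (hsub : IsRootSubsystem v (RV v) Φ) {b : Fin n → ℤ} (hb : b ∈ Φ) : -b ∈ Φ := by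
  have h2 : (2 * formV v b b) / formV v b b = 2 := by
    rcases normRV v (hsub.1 hb) with h | h <;> rw [h] <;> norm_num
  have := hsub.2 b hb b hb
  rw [h2] at this
  have heq : b - (2 : ℤ) • b = -b := by
    funext j
    simp only [Pi.sub_apply, Pi.smul_apply, Pi.neg_apply, smul_eq_mul]
    ring
  rwa [heq] at this

/-- simple roots are pairwise obtuse -/
lemma obtuse (hsub : IsRootSubsystem v (RV v) Φ) (hbase : IsBase v Φ Δ)
    {a b : Fin n → ℤ} (ha : a ∈ Δ) (hb : b ∈ Δ) (hab : a ≠ b) :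
    formV v a b ≤ 0 := by
  classical
  by_contra hpos
  push_neg at hpos
  have hc1 : 1 ≤ formV v a b := hpos
  have hb' : b - ((2 * formV v b a) / formV v a a) • a ∈ Φ :=
    hsub.2 a (hbase.1 ha) b (hbase.1 hb)
  set t := (2 * formV v b a) / formV v a a with hts
  have hba : formV v b a = formV v a b := formV_comm v b a
  have ht : 1 ≤ t := by
    rcases normRV v (hsub.1 (hbase.1 ha)) with h | h
    · rw [hts, h, Int.ediv_one, hba]; omega
    · rw [hts, h, hba]
      rw [Int.mul_ediv_cancel_left _ (by norm_num : (2:ℤ) ≠ 0)]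
      omega
  set p : (Fin n → ℤ) → ℤ := fun x => (if x = b then 1 else 0) + (if x = a then -t else 0) with hps
  have hp : ∑ x ∈ Δ, p x • x = b - t • a := by
    rw [hps]
    have : ∀ x ∈ Δ, ((if x = b then (1:ℤ) else 0) + (if x = a then -t else 0)) • x
        = (if x = b then (1:ℤ) else 0) • x + (if x = a then -t else 0) • x :=
      fun x _ => add_smul _ _ _
    rw [Finset.sum_congr rfl this, Finset.sum_add_distrib,
      sum_ite_smul b hb 1, sum_ite_smul a ha (-t)]
    funext j; simp; ring
  rcases hbase.2.2 _ hb' with ⟨cc, hcc⟩ | ⟨cc, hcc⟩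
  · have huniq := uniqCoeff hbase.2.1 p (fun x => (cc x : ℤ)) (by rw [hp, ← hcc])
    have h2 : -t = (cc a : ℤ) := by simpa [hps, hab] using huniq a ha
    have h3 : (0:ℤ) ≤ (cc a : ℤ) := Int.natCast_nonneg _
    omega
  · have hneg : ∑ x ∈ Δ, (-(cc x : ℤ)) • x = b - t • a := by
      have h1 : ∑ x ∈ Δ, (-(cc x : ℤ)) • x = -∑ x ∈ Δ, ((cc x : ℤ)) • x := by
        rw [← Finset.sum_neg_distrib]
        exact Finset.sum_congr rfl fun x _ => by rw [neg_smul]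
      rw [h1, ← hcc]
    have huniq := uniqCoeff hbase.2.1 p (fun x => (-(cc x : ℤ))) (by rw [hp, hneg])
    have h2 : (1:ℤ) = -(cc b : ℤ) := by simpa [hps, Ne.symm hab] using huniq b hb
    have h3 : (0:ℤ) ≤ (cc b : ℤ) := Int.natCast_nonneg _
    omega

end Layer3

section Layer3b

variable {n m : ℕ} {v : Fin m → Fin n → ℤ} {Φ : Set (Fin n → ℤ)} {Δ : Finset (Fin n → ℤ)}

lemma formV_zero_left (x : Fin n → ℤ) : formV v 0 x = 0 := by
  have h : (0 : Fin n → ℤ) = (0:ℤ) • (0 : Fin n → ℤ) := by simp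
  rw [h, formV_smul_left]; ring

lemma nosplitD (hv : Module.finrank ℤ (Submodule.span ℤ (Set.range v)) = n)
    (hsub : IsRootSubsystem v (RV v) Φ) (hbase : IsBase v Φ Δ) (hirr : IsIrred v Φ)
    (S : Finset (Fin n → ℤ)) (hSsub : S ⊆ Δ) (hS : S.Nonempty) (hT : (Δ \ S).Nonempty)
    (horth : ∀ a ∈ S, ∀ b ∈ Δ \ S, formV v a b = 0) : False := by
  classical
  -- supported sums are nonzero
  have hsuppne : ∀ (U : Finset (Fin n → ℤ)), U ⊆ Δ → ∀ c : (Fin n → ℤ) → ℤ,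
      (∃ x ∈ U, c x ≠ 0) → ∑ x ∈ U, c x • x ≠ 0 := by
    rintro U hU c ⟨x0, hx0U, hx0⟩ h0
    have h1 : ∑ x ∈ Δ, (if x ∈ U then c x else 0) • x = ∑ x ∈ Δ, (0:ℤ) • x := by
      have e1 : ∀ x ∈ Δ, (if x ∈ U then c x else 0) • x = (if x ∈ U then c x • x else 0) := by
        intro x _; by_cases h : x ∈ U <;> simp [h]
      rw [Finset.sum_congr rfl e1, ← Finset.sum_filter, Finset.filter_mem_eq_inter,
        Finset.inter_eq_right.mpr hU, h0]
      exact (Finset.sum_eq_zero fun x _ => by simp).symm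
    have := uniqCoeff hbase.2.1 _ _ h1 x0 (hU hx0U)
    rw [if_pos hx0U] at this
    exact hx0 this
  -- the descent: no straddling roots
  have main : ∀ N : ℕ, ∀ b, b ∈ Φ → ∀ c : (Fin n → ℤ) → ℕ,
      b = ∑ x ∈ Δ, (c x : ℤ) • x → (∑ x ∈ S, c x) = N →
      (∃ x ∈ S, c x ≠ 0) → (∃ x ∈ Δ \ S, c x ≠ 0) → False := by
    intro N
    induction N using Nat.strong_induction_on with
    | _ N IH =>
    rintro b hb c hrep hsum ⟨xS, hxS, hcS⟩ ⟨xT, hxT, hcT⟩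
    set x₀ := ∑ x ∈ S, (c x : ℤ) • x with hx0
    set y₀ := ∑ x ∈ Δ \ S, (c x : ℤ) • x with hy0
    have hbxy : b = x₀ + y₀ := by
      rw [hrep, ← Finset.sum_sdiff hSsub, hx0, hy0, add_comm]
    have hx0ne : x₀ ≠ 0 :=
      hsuppne S hSsub _ ⟨xS, hxS, Int.natCast_ne_zero.mpr hcS⟩
    have hfx : 1 ≤ formV v x₀ x₀ := formV_self_pos hv hx0ne
    have hexp : formV v x₀ x₀ = ∑ d ∈ S, (c d : ℤ) * formV v d x₀ := by
      rw [hx0, formV_sum_left]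
      exact Finset.sum_congr rfl fun d _ => formV_smul_left v _ _ _
    obtain ⟨d, hdS, hdpos⟩ : ∃ d ∈ S, 0 < (c d : ℤ) * formV v d x₀ := by
      by_contra hcon
      push_neg at hcon
      have := Finset.sum_nonpos hcon
      omega
    have hcd0 : 0 ≤ (c d : ℤ) := Int.natCast_nonneg _
    have hfd1 : 1 ≤ formV v d x₀ := by
      by_contra hcon
      push_neg at hcon
      have : formV v d x₀ ≤ 0 := by omega
      nlinarith
    have hdy : formV v d y₀ = 0 := by
      rw [formV_comm, hy0, formV_sum_left]
      apply Finset.sum_eq_zero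
      intro e he
      rw [formV_smul_left, formV_comm, horth d hdS e he]
      ring
    have hdb : formV v d b = formV v d x₀ := by
      have : formV v (x₀ + y₀) d = formV v x₀ d + formV v y₀ d := formV_add_left _ _ _
      rw [hbxy, formV_comm, this, formV_comm v x₀ d, formV_comm v y₀ d, hdy, add_zero,
        formV_comm]
    have hbd : formV v b d = formV v d x₀ := by rw [formV_comm]; exact hdb
    have hdΔ : d ∈ Δ := hSsub hdS
    have hdd := normRV v (hsub.1 (hbase.1 hdΔ))
    set t := (2 * formV v b d) / formV v d d with hts
    have ht1 : 1 ≤ t := by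
      rcases hdd with h | h
      · rw [hts, h, Int.ediv_one]; omega
      · rw [hts, h, Int.mul_ediv_cancel_left _ (by norm_num : (2:ℤ) ≠ 0)]; omega
    have ht2 : t * formV v d d = 2 * formV v b d := by
      rcases hdd with h | h
      · rw [hts, h, Int.ediv_one]; ring
      · rw [hts, h, Int.mul_ediv_cancel_left _ (by norm_num : (2:ℤ) ≠ 0)]; ring
    have hb' : b - t • d ∈ Φ := by
      have := hsub.2 d (hbase.1 hdΔ) b hb
      rwa [← hts] at this
    set p : (Fin n → ℤ) → ℤ := fun x => (c x : ℤ) - (if x = d then t else 0) with hps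
    have hp : ∑ x ∈ Δ, p x • x = b - t • d := by
      rw [hps]
      have e1 : ∀ x ∈ Δ, ((c x : ℤ) - (if x = d then t else 0)) • x
          = (c x : ℤ) • x - (if x = d then t else 0) • x := fun x _ => sub_smul _ _ _
      rw [Finset.sum_congr rfl e1, Finset.sum_sub_distrib, ← hrep, sum_ite_smul d hdΔ t]
    rcases hbase.2.2 _ hb' with ⟨q, hq⟩ | ⟨q, hq⟩
    · have huniq := uniqCoeff hbase.2.1 (fun x => (q x : ℤ)) p (by rw [hp, ← hq])
      have hqd : (q d : ℤ) = (c d : ℤ) - t := by simpa [hps] using huniq d hdΔ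
      have hqe : ∀ x, x ∈ Δ → x ≠ d → (q x : ℤ) = (c x : ℤ) := by
        intro x hx hxd
        simpa [hps, hxd] using huniq x hx
      have hsum' : ∑ x ∈ S, q x < N := by
        have hZ : (∑ x ∈ S, (q x : ℤ)) = (∑ x ∈ S, (c x : ℤ)) - t := by
          have e2 : ∀ x ∈ S, (q x : ℤ) = (c x : ℤ) - (if x = d then t else 0) := by
            intro x hx
            rcases eq_or_ne x d with h | h
            · subst h; simp [hqd]
            · simp [hqe x (hSsub hx) h, h]
          rw [Finset.sum_congr rfl e2, Finset.sum_sub_distrib,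
            Finset.sum_ite_eq' S d (fun _ => t), if_pos hdS]
        have hc1 : ((∑ x ∈ S, q x : ℕ) : ℤ) = ∑ x ∈ S, (q x : ℤ) := by push_cast; rfl
        have hc2 : ((∑ x ∈ S, c x : ℕ) : ℤ) = ∑ x ∈ S, (c x : ℤ) := by push_cast; rfl
        have : ((∑ x ∈ S, q x : ℕ) : ℤ) = ((N : ℕ) : ℤ) - t := by
          rw [hc1, hZ, ← hc2, hsum]
        omega
      have hxTΔ : xT ∈ Δ := (Finset.mem_sdiff.mp hxT).1
      have hxTd : xT ≠ d := by
        intro h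
        exact (Finset.mem_sdiff.mp hxT).2 (h ▸ hdS)
      have hTstr : ∃ x ∈ Δ \ S, q x ≠ 0 := by
        refine ⟨xT, hxT, ?_⟩
        have := hqe xT hxTΔ hxTd
        intro h0
        rw [h0] at this
        exact hcT (by exact_mod_cast this.symm)
      have hSstr : ∃ x ∈ S, q x ≠ 0 := by
        by_contra hcon
        push_neg at hcon
        have hx0' : ∑ x ∈ S, (q x : ℤ) • x = x₀ - t • d := by
          have e2 : ∀ x ∈ S, (q x : ℤ) • x = ((c x : ℤ) - (if x = d then t else 0)) • x := by
            intro x hx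
            rcases eq_or_ne x d with h | h
            · subst h; rw [hqd]; simp
            · rw [hqe x (hSsub hx) h, if_neg h]; simp
          have e3 : ∀ x ∈ S, ((c x : ℤ) - (if x = d then t else 0)) • x
              = (c x : ℤ) • x - (if x = d then t else 0) • x := fun x _ => sub_smul _ _ _
          rw [Finset.sum_congr rfl e2, Finset.sum_congr rfl e3, Finset.sum_sub_distrib,
            sum_ite_smul d hdS t, ← hx0]
        have hzero : ∑ x ∈ S, (q x : ℤ) • x = 0 :=
          Finset.sum_eq_zero fun x hx => by rw [hcon x hx]; simp
        have hTD : t * formV v d d = 2 * formV v d x₀ := by rw [ht2, hbd]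
        have hnorm : formV v (x₀ - t • d) (x₀ - t • d) = formV v x₀ x₀ := by
          have c1 : formV v (x₀ - t • d) (x₀ - t • d)
              = formV v x₀ (x₀ - t • d) - t * formV v d (x₀ - t • d) := by
            rw [formV_sub_left, formV_smul_left]
          have c2 : formV v x₀ (x₀ - t • d) = formV v x₀ x₀ - t * formV v d x₀ := by
            rw [formV_comm, formV_sub_left, formV_smul_left]
          have c3 : formV v d (x₀ - t • d) = formV v d x₀ - t * formV v d d := by
            rw [formV_comm, formV_sub_left, formV_smul_left, formV_comm v x₀ d]
          rw [c1, c2, c3]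
          linear_combination t * hTD
        have hne : x₀ - t • d ≠ 0 := by
          intro h0
          rw [h0] at hnorm
          rw [formV_zero_left] at hnorm
          omega
        rw [hx0'] at hzero
        exact hne hzero
      exact IH (∑ x ∈ S, q x) hsum' (b - t • d) hb' q hq rfl hSstr hTstr
    · have hneg : ∑ x ∈ Δ, (-(q x : ℤ)) • x = b - t • d := by
        have h1 : ∑ x ∈ Δ, (-(q x : ℤ)) • x = -∑ x ∈ Δ, ((q x : ℤ)) • x := by
          rw [← Finset.sum_neg_distrib]
          exact Finset.sum_congr rfl fun x _ => by rw [neg_smul]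
        rw [h1, ← hq]
      have huniq := uniqCoeff hbase.2.1 p (fun x => (-(q x : ℤ))) (by rw [hp, hneg])
      have hxTΔ : xT ∈ Δ := (Finset.mem_sdiff.mp hxT).1
      have hxTd : xT ≠ d := by
        intro h
        exact (Finset.mem_sdiff.mp hxT).2 (h ▸ hdS)
      have h2 : (c xT : ℤ) = -(q xT : ℤ) := by simpa [hps, hxTd] using huniq xT hxTΔ
      have h3 : (0:ℤ) ≤ (q xT : ℤ) := Int.natCast_nonneg _
      have h4 : (c xT : ℤ) ≠ 0 := Int.natCast_ne_zero.mpr hcT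
      have h5 : (0:ℤ) ≤ (c xT : ℤ) := Int.natCast_nonneg _
      omega
  -- alternative: every root is supported on one side
  have halt : ∀ bb, bb ∈ Φ → ∀ c : (Fin n → ℤ) → ℕ, bb = ∑ x ∈ Δ, (c x : ℤ) • x →
      (∀ e ∈ Δ \ S, formV v bb e = 0) ∨ (∀ e ∈ S, formV v bb e = 0) := by
    intro bb hbb c hc
    by_cases hstr : ∃ x ∈ S, c x ≠ 0
    · left
      have hTz : ∀ x ∈ Δ \ S, c x = 0 := by
        by_contra hcon
        push_neg at hcon
        obtain ⟨e, he, hce⟩ := hcon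
        exact main _ bb hbb c hc rfl hstr ⟨e, he, hce⟩
      intro e he
      rw [hc, formV_sum_left]
      apply Finset.sum_eq_zero
      intro x hx
      rw [formV_smul_left]
      by_cases hxS : x ∈ S
      · rw [horth x hxS e he]; ring
      · rw [hTz x (Finset.mem_sdiff.mpr ⟨hx, hxS⟩)]; simp
    · right
      push_neg at hstr
      intro e he
      rw [hc, formV_sum_left]
      apply Finset.sum_eq_zero
      intro x hx
      rw [formV_smul_left]
      by_cases hxS : x ∈ S
      · rw [hstr x hxS]; simp
      · rw [formV_comm, horth e he x (Finset.mem_sdiff.mpr ⟨hx, hxS⟩)]; ring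
  -- a root cannot be orthogonal to all of its side
  obtain ⟨xS, hxS⟩ := hS
  obtain ⟨xT, hxT⟩ := hT
  set Φ₁ : Set (Fin n → ℤ) := {b | b ∈ Φ ∧ ∀ e ∈ Δ \ S, formV v b e = 0} with hPhi1
  set Φ₂ : Set (Fin n → ℤ) := {b | b ∈ Φ ∧ ∀ e ∈ S, formV v b e = 0} with hPhi2
  have hsplitb : ∀ b ∈ Φ, (∀ e ∈ Δ \ S, formV v b e = 0) ∨ (∀ e ∈ S, formV v b e = 0) := by
    intro b hb
    rcases hbase.2.2 b hb with ⟨c, hc⟩ | ⟨c, hc⟩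
    · exact halt b hb c hc
    · have hnb : -b ∈ Φ := negMem hsub hb
      have hnbc : -b = ∑ x ∈ Δ, (c x : ℤ) • x := by rw [hc]; simp
      rcases halt (-b) hnb c hnbc with h | h
      · left
        intro e he
        have := h e he
        rw [formV_neg_left] at this
        omega
      · right
        intro e he
        have := h e he
        rw [formV_neg_left] at this
        omega
  have hcover : Φ = Φ₁ ∪ Φ₂ := by
    apply Set.ext
    intro b
    constructor
    · intro hb
      rcases hsplitb b hb with h | h
      · exact Or.inl ⟨hb, h⟩
      · exact Or.inr ⟨hb, h⟩
    · rintro (h | h)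
      · exact h.1
      · exact h.1
  have horthPhi : ∀ a ∈ Φ₁, ∀ b ∈ Φ₂, formV v a b = 0 := by
    intro a ha b hb
    -- get a representation of a or -a
    have key : ∀ aa, aa ∈ Φ → (∀ e ∈ Δ \ S, formV v aa e = 0) →
        ∀ c : (Fin n → ℤ) → ℕ, aa = ∑ x ∈ Δ, (c x : ℤ) • x →
        (∀ e ∈ S, formV v b e = 0) → formV v aa b = 0 := by
      intro aa haa haT c hc hbS
      by_cases hstr : ∃ x ∈ S, c x ≠ 0
      · -- T coeffs vanish, so aa supported in S, and b ⟂ S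
        have hTz : ∀ x ∈ Δ \ S, c x = 0 := by
          by_contra hcon
          push_neg at hcon
          obtain ⟨e, he, hce⟩ := hcon
          exact main _ aa haa c hc rfl hstr ⟨e, he, hce⟩
        rw [hc, formV_sum_left]
        apply Finset.sum_eq_zero
        intro x hx
        rw [formV_smul_left]
        by_cases hxS : x ∈ S
        · rw [formV_comm, hbS x hxS]; ring
        · rw [hTz x (Finset.mem_sdiff.mpr ⟨hx, hxS⟩)]; simp
      · -- aa supported in T, but aa ⟂ T forces formV aa aa = 0, contradiction
        push_neg at hstr
        exfalso
        have hzero : formV v aa aa = 0 := by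
          nth_rewrite 1 [hc]
          rw [formV_sum_left]
          apply Finset.sum_eq_zero
          intro x hx
          rw [formV_smul_left]
          by_cases hxS : x ∈ S
          · rw [hstr x hxS]; simp
          · rw [formV_comm, haT x (Finset.mem_sdiff.mpr ⟨hx, hxS⟩)]; ring
        rcases normRV v (hsub.1 haa) with h | h <;> omega
    rcases hbase.2.2 a ha.1 with ⟨c, hc⟩ | ⟨c, hc⟩
    · exact key a ha.1 ha.2 c hc hb.2
    · have hna : -a ∈ Φ := negMem hsub ha.1
      have hnac : -a = ∑ x ∈ Δ, (c x : ℤ) • x := by rw [hc]; simp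
      have hnaT : ∀ e ∈ Δ \ S, formV v (-a) e = 0 := by
        intro e he
        rw [formV_neg_left, ha.2 e he]
        ring
      have := key (-a) hna hnaT c hnac hb.2
      rw [formV_neg_left] at this
      omega
  have hne1 : xS ∈ Φ₁ := ⟨hbase.1 (hSsub hxS), fun e he => horth xS hxS e he⟩
  have hne2 : xT ∈ Φ₂ :=
    ⟨hbase.1 (Finset.mem_sdiff.mp hxT).1, fun e he => by
      rw [formV_comm]; exact horth e he xT hxT⟩
  rcases hirr.2 Φ₁ Φ₂ hcover horthPhi with h | h
  · rw [h] at hne1; exact hne1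
  · rw [h] at hne2; exact hne2

end Layer3b

section Layer4

variable {m : ℕ}

lemma dotm_sum_right {ι : Type*} (x : Fin m → ℤ) (s : Finset ι) (g : ι → Fin m → ℤ) :
    dotm x (∑ i ∈ s, g i) = ∑ i ∈ s, dotm x (g i) := by
  rw [dotm_comm, dotm_sum_left]
  exact Finset.sum_congr rfl fun i _ => dotm_comm _ _

lemma sum_ite_smulF {ι : Type*} [Fintype ι] [DecidableEq ι] (d : ι) (g : ι → Fin m → ℤ) (t : ℤ) :
    ∑ i, (if i = d then t else 0) • g i = t • g d := by
  have e1 : ∀ i ∈ Finset.univ, (if i = d then t else 0) • g i = (if i = d then t • g i else 0) := by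
    intro i _; by_cases h : i = d <;> simp [h]
  rw [Finset.sum_congr rfl e1, Finset.sum_ite_eq' Finset.univ d (fun i => t • g i),
    if_pos (Finset.mem_univ d)]

lemma gramB_diag {ℓ : ℕ} (i : Fin ℓ) : gramB ℓ i i = if (i : ℕ) = ℓ - 1 then 1 else 2 := by
  simp [gramB]

lemma gramB_off {ℓ : ℕ} (i j : Fin ℓ) (h : i ≠ j) :
    gramB ℓ i j = if ((i : ℕ) + 1 = j ∨ (j : ℕ) + 1 = i) then -1 else 0 := by
  simp [gramB, h]

theorem coreB (ℓ : ℕ) : ∀ f : Fin ℓ → (Fin m → ℤ),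
    (∀ c : Fin ℓ → ℤ, ∑ i, c i • f i = 0 → ∀ i, c i = 0) →
    (∀ i, dotm (f i) (f i) = 1 ∨ dotm (f i) (f i) = 2) →
    (∀ i j, i ≠ j → dotm (f i) (f j) = 0 ∨ dotm (f i) (f j) = -1) →
    (∃ i, dotm (f i) (f i) = 1) →
    (∀ S : Finset (Fin ℓ), S.Nonempty → S ≠ Finset.univ →
      ∃ i ∈ S, ∃ j, j ∉ S ∧ dotm (f i) (f j) ≠ 0) →
    ∃ σ : Fin ℓ ≃ Fin ℓ, ∀ i j, dotm (f (σ i)) (f (σ j)) = gramB ℓ i j := by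
  induction ℓ with
  | zero =>
    intro f _ _ _ HS _
    obtain ⟨i, _⟩ := HS
    exact i.elim0
  | succ ℓ' IH =>
    cases ℓ' with
    | zero =>
      intro f _ _ _ HS _
      refine ⟨Equiv.refl _, ?_⟩
      intro i j
      obtain ⟨i0, h0⟩ := HS
      have hi : i = i0 := Fin.ext (by omega)
      have hj : j = i0 := Fin.ext (by omega)
      rw [gramB_one]
      simpa [hi, hj] using h0
    | succ ℓ'' =>
      intro f HI HD HO HS HC
      classical
      set deg : Fin (ℓ''+1+1) → ℕ :=
        fun i => (Finset.univ.filter (fun j => j ≠ i ∧ dotm (f i) (f j) ≠ 0)).card with hdeg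
      -- the master inequality
      have hexpand : dotm (∑ i, f i) (∑ i, f i)
          = ∑ i, (dotm (f i) (f i) + ∑ j ∈ Finset.univ.erase i, dotm (f i) (f j)) := by
        rw [dotm_sum_left]
        apply Finset.sum_congr rfl
        intro i _
        rw [dotm_sum_right]
        exact (Finset.add_sum_erase _ _ (Finset.mem_univ i)).symm
      have hrowsum : ∀ i, ∑ j ∈ Finset.univ.erase i, dotm (f i) (f j) = -(deg i : ℤ) := by
        intro i
        have e0 : (Finset.univ.erase i).filter (fun j => dotm (f i) (f j) ≠ 0)
            = Finset.univ.filter (fun j => j ≠ i ∧ dotm (f i) (f j) ≠ 0) := by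
          ext j
          simp [Finset.mem_erase, and_comm]
        rw [← Finset.sum_filter_ne_zero]
        have e1 : ∀ j ∈ (Finset.univ.erase i).filter (fun j => dotm (f i) (f j) ≠ 0),
            dotm (f i) (f j) = -1 := by
          intro j hj
          simp only [Finset.mem_filter, Finset.mem_erase] at hj
          rcases HO i j (Ne.symm hj.1.1) with h | h
          · exact absurd h hj.2
          · exact h
        rw [Finset.sum_congr rfl e1, Finset.sum_const, e0]
        simp [hdeg]
      have hmaster : 1 ≤ (∑ i, dotm (f i) (f i)) - ∑ i, (deg i : ℤ) := by
        have hne : (∑ i, f i) ≠ 0 := by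
          intro h0
          have h1 : ∑ i, (1:ℤ) • f i = 0 := by
            rw [← h0]
            exact Finset.sum_congr rfl fun i _ => one_smul _ _
          have := HI _ h1 0
          norm_num at this
        have h2 := dotm_pos hne
        rw [hexpand, Finset.sum_add_distrib] at h2
        have h3 : ∑ i, ∑ j ∈ Finset.univ.erase i, dotm (f i) (f j) = -∑ i, (deg i : ℤ) := by
          rw [← Finset.sum_neg_distrib]
          exact Finset.sum_congr rfl fun i _ => hrowsum i
        rw [h3] at h2
        omega
      -- every vertex has a neighbor
      have hdeg1 : ∀ i, 1 ≤ deg i := by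
        intro i
        have hne : ({i} : Finset (Fin (ℓ''+1+1))) ≠ Finset.univ := by
          intro h
          have h1 : (Finset.univ : Finset (Fin (ℓ''+1+1))).card = 1 := by
            rw [← h]; simp
          rw [Finset.card_univ, Fintype.card_fin] at h1
          omega
        obtain ⟨i', hi', j, hj, hdot⟩ := HC {i} (Finset.singleton_nonempty i) hne
        have hii : i' = i := Finset.mem_singleton.mp hi'
        subst hii
        have hji : j ≠ i' := fun h => hj (h ▸ Finset.mem_singleton_self i')
        have : j ∈ Finset.univ.filter (fun j => j ≠ i' ∧ dotm (f i') (f j) ≠ 0) := by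
          simp [hji, hdot]
        rw [hdeg]
        exact Finset.card_pos.mpr ⟨j, this⟩
      -- a short vertex has degree at most 1
      have hshortdeg : ∀ s, dotm (f s) (f s) = 1 → deg s ≤ 1 := by
        intro s hs
        by_contra hcon
        push_neg at hcon
        obtain ⟨d₁, hd₁, d₂, hd₂, hdne⟩ := Finset.one_lt_card.mp hcon
        simp only [Finset.mem_filter, Finset.mem_univ, true_and] at hd₁ hd₂
        have hdot1 : dotm (f s) (f d₁) = -1 := by
          rcases HO s d₁ (Ne.symm hd₁.1) with h | h
          · exact absurd h hd₁.2
          · exact h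
        have hdot2 : dotm (f s) (f d₂) = -1 := by
          rcases HO s d₂ (Ne.symm hd₂.1) with h | h
          · exact absurd h hd₂.2
          · exact h
        set u := (2:ℤ) • f s + f d₁ + f d₂ with hu
        have he : dotm u u = 4 * dotm (f s) (f s) + dotm (f d₁) (f d₁) + dotm (f d₂) (f d₂)
            + 4 * dotm (f s) (f d₁) + 4 * dotm (f s) (f d₂) + 2 * dotm (f d₁) (f d₂) := by
          rw [hu]
          simp only [dotm_add_left, dotm_add_right, dotm_smul_left, dotm_smul_right,
            dotm_comm (f d₁) (f s), dotm_comm (f d₂) (f s), dotm_comm (f d₂) (f d₁)]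
          ring
        have hle : dotm u u ≤ 0 := by
          have b1 := HD d₁
          have b2 := HD d₂
          have b3 : dotm (f d₁) (f d₂) ≤ 0 := by
            rcases HO d₁ d₂ hdne with h | h <;> omega
          rw [he, hs, hdot1, hdot2]
          omega
        have hzero : u = 0 := dotm_self_eq_zero (le_antisymm hle (dotm_nonneg u))
        set c : Fin (ℓ''+1+1) → ℤ := fun i =>
          (if i = s then 2 else 0) + (if i = d₁ then 1 else 0) + (if i = d₂ then 1 else 0) with hc
        have hrel : ∑ i, c i • f i = u := by
          rw [hc]
          have e1 : ∀ i ∈ Finset.univ,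
              ((if i = s then (2:ℤ) else 0) + (if i = d₁ then 1 else 0) + (if i = d₂ then 1 else 0)) • f i
              = (if i = s then (2:ℤ) else 0) • f i + (if i = d₁ then (1:ℤ) else 0) • f i
                + (if i = d₂ then (1:ℤ) else 0) • f i := by
            intro i _
            rw [add_smul, add_smul]
          rw [Finset.sum_congr rfl e1, Finset.sum_add_distrib, Finset.sum_add_distrib,
            sum_ite_smulF s f 2, sum_ite_smulF d₁ f 1, sum_ite_smulF d₂ f 1, hu]
          rw [one_smul, one_smul]
        have := HI c (by rw [hrel, hzero]) s
        rw [hc] at this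
        simp [Ne.symm hd₁.1, Ne.symm hd₂.1] at this
      -- existence of a long leaf
      obtain ⟨t0, hlong, hdegt⟩ : ∃ t0, dotm (f t0) (f t0) = 2 ∧ deg t0 = 1 := by
        by_contra hcon
        push_neg at hcon
        have hge : ∀ i, (dotm (f i) (f i)) ≤ (deg i : ℤ) := by
          intro i
          rcases HD i with h | h
          · rw [h]; exact_mod_cast hdeg1 i
          · rw [h]
            have h1 := hdeg1 i
            have h2 := hcon i h
            have : 2 ≤ deg i := by omega
            exact_mod_cast this
        have : ∑ i, dotm (f i) (f i) ≤ ∑ i, (deg i : ℤ) :=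
          Finset.sum_le_sum fun i _ => hge i
        omega
      -- the unique neighbor of the long leaf
      obtain ⟨nt, hntmem⟩ := Finset.card_eq_one.mp hdegt
      have hntprop : nt ≠ t0 ∧ dotm (f t0) (f nt) ≠ 0 := by
        have : nt ∈ Finset.univ.filter (fun j => j ≠ t0 ∧ dotm (f t0) (f j) ≠ 0) := by
          rw [hntmem]; exact Finset.mem_singleton_self nt
        simpa using this
      have hntuniq : ∀ j, j ≠ t0 → dotm (f t0) (f j) ≠ 0 → j = nt := by
        intro j hj hdot
        have : j ∈ Finset.univ.filter (fun j => j ≠ t0 ∧ dotm (f t0) (f j) ≠ 0) := by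
          simp [hj, hdot]
        rw [hntmem] at this
        exact Finset.mem_singleton.mp this
      -- restrict to the complement of t0
      set g : Fin (ℓ''+1) → Fin m → ℤ := fun k => f (t0.succAbove k) with hg
      have HI' : ∀ c : Fin (ℓ''+1) → ℤ, ∑ k, c k • g k = 0 → ∀ k, c k = 0 := by
        intro c hc k
        set cc : Fin (ℓ''+1+1) → ℤ := Function.extend t0.succAbove c (fun _ => 0) with hcc
        have hccs : ∀ k', cc (t0.succAbove k') = c k' :=
          fun k' => (Fin.succAbove_right_injective (p := t0)).extend_apply c _ k'
        have hcct : cc t0 = 0 := by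
          rw [hcc, Function.extend_apply']
          rintro ⟨k', hk'⟩
          exact Fin.succAbove_ne t0 k' hk'
        have hsum0 : ∑ j, cc j • f j = 0 := by
          rw [Fin.sum_univ_succAbove (fun j => cc j • f j) t0, hcct, zero_smul, zero_add]
          rw [← hc]
          exact Finset.sum_congr rfl fun k' _ => by rw [hccs k']
        have := HI cc hsum0 (t0.succAbove k)
        rwa [hccs k] at this
      have HD' : ∀ k, dotm (g k) (g k) = 1 ∨ dotm (g k) (g k) = 2 := fun k => HD _
      have HO' : ∀ k j, k ≠ j → dotm (g k) (g j) = 0 ∨ dotm (g k) (g j) = -1 :=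
        fun k j hkj => HO _ _ (fun h => hkj (Fin.succAbove_right_injective h))
      have HS' : ∃ k, dotm (g k) (g k) = 1 := by
        obtain ⟨s, hs⟩ := HS
        have hst : s ≠ t0 := by
          intro h; rw [h, hlong] at hs; omega
        obtain ⟨k, hk⟩ := Fin.exists_succAbove_eq hst
        refine ⟨k, ?_⟩
        show dotm (f (t0.succAbove k)) (f (t0.succAbove k)) = 1
        rw [hk]; exact hs
      obtain ⟨nt', hnt'⟩ := Fin.exists_succAbove_eq hntprop.1
      have HC' : ∀ S : Finset (Fin (ℓ''+1)), S.Nonempty → S ≠ Finset.univ →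
          ∃ i ∈ S, ∃ j, j ∉ S ∧ dotm (g i) (g j) ≠ 0 := by
        intro S' hS'ne hS'univ
        obtain ⟨k0, hk0⟩ := hS'ne
        obtain ⟨k1, hk1⟩ : ∃ k1, k1 ∉ S' := by
          by_contra hcon; push_neg at hcon
          exact hS'univ (Finset.eq_univ_iff_forall.mpr hcon)
        by_cases hmem : nt' ∈ S'
        · set S : Finset (Fin (ℓ''+1+1)) := insert t0 (S'.image t0.succAbove) with hSdef
          have hSne : S.Nonempty := ⟨t0, Finset.mem_insert_self _ _⟩
          have hSuniv : S ≠ Finset.univ := by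
            intro h
            have h2 : t0.succAbove k1 ∈ S := h ▸ Finset.mem_univ _
            rw [hSdef] at h2
            rcases Finset.mem_insert.mp h2 with h1 | h1
            · exact Fin.succAbove_ne t0 k1 h1
            · obtain ⟨k2, hk2, hk2e⟩ := Finset.mem_image.mp h1
              exact hk1 (Fin.succAbove_right_injective hk2e ▸ hk2)
          obtain ⟨i, hiS, j, hjS, hdot⟩ := HC S hSne hSuniv
          have hjt0 : j ≠ t0 := fun h => hjS (h ▸ Finset.mem_insert_self t0 _)
          obtain ⟨j', hj'⟩ := Fin.exists_succAbove_eq hjt0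
          have hj'S : j' ∉ S' := by
            intro h
            exact hjS (hSdef ▸ Finset.mem_insert_of_mem (Finset.mem_image.mpr ⟨j', h, hj'⟩))
          rcases Finset.mem_insert.mp (hSdef ▸ hiS) with h1 | h1
          · exfalso
            have hjnt : j = nt := hntuniq j hjt0 (by rw [← h1]; exact hdot)
            have hj'nt : j' = nt' := by
              apply Fin.succAbove_right_injective (p := t0)
              rw [hj', hnt', hjnt]
            exact hj'S (hj'nt ▸ hmem)
          · obtain ⟨i', hi', hi'e⟩ := Finset.mem_image.mp h1
            refine ⟨i', hi', j', hj'S, ?_⟩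
            show dotm (f (t0.succAbove i')) (f (t0.succAbove j')) ≠ 0
            rw [hi'e, hj']; exact hdot
        · set S : Finset (Fin (ℓ''+1+1)) := S'.image t0.succAbove with hSdef
          have hSne : S.Nonempty := ⟨t0.succAbove k0, Finset.mem_image.mpr ⟨k0, hk0, rfl⟩⟩
          have hSuniv : S ≠ Finset.univ := by
            intro h
            have h2 : t0 ∈ S := h ▸ Finset.mem_univ _
            obtain ⟨k2, _, hk2e⟩ := Finset.mem_image.mp (hSdef ▸ h2)
            exact Fin.succAbove_ne t0 k2 hk2e
          obtain ⟨i, hiS, j, hjS, hdot⟩ := HC S hSne hSuniv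
          obtain ⟨i', hi', hi'e⟩ := Finset.mem_image.mp (hSdef ▸ hiS)
          by_cases hjt0 : j = t0
          · exfalso
            have hit0 : i ≠ t0 := by
              intro h
              rw [h] at hi'e
              exact Fin.succAbove_ne t0 i' hi'e
            have hint : i = nt := by
              apply hntuniq i hit0
              rw [dotm_comm]
              rw [hjt0] at hdot
              exact hdot
            have : i' = nt' := by
              apply Fin.succAbove_right_injective (p := t0)
              rw [hi'e, hnt', hint]
            exact hmem (this ▸ hi')
          · obtain ⟨j', hj'⟩ := Fin.exists_succAbove_eq hjt0
            have hj'S : j' ∉ S' := fun h => hjS (hSdef ▸ Finset.mem_image.mpr ⟨j', h, hj'⟩)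
            refine ⟨i', hi', j', hj'S, ?_⟩
            show dotm (f (t0.succAbove i')) (f (t0.succAbove j')) ≠ 0
            rw [hi'e, hj']; exact hdot
      obtain ⟨σ', hσ'⟩ := IH g HI' HD' HO' HS' HC'
      set E : Fin (ℓ''+1) → Fin (ℓ''+1+1) := fun k => t0.succAbove (σ' k) with hE
      have hgram : ∀ k j, dotm (f (E k)) (f (E j)) = gramB (ℓ''+1) k j := fun k j => hσ' k j
      set j₀ : Fin (ℓ''+1) := σ'.symm nt' with hj₀
      have hEj₀ : E j₀ = nt := by rw [hE]; simp only [hj₀, Equiv.apply_symm_apply]; rw [hnt']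
      have hEinj : Function.Injective E := fun a b h =>
        σ'.injective (Fin.succAbove_right_injective h)
      have hEne : ∀ k, E k ≠ t0 := fun k => Fin.succAbove_ne t0 (σ' k)
      have hdott0 : ∀ k, dotm (f t0) (f (E k)) = if k = j₀ then -1 else 0 := by
        intro k
        by_cases h : k = j₀
        · subst h; rw [hEj₀, if_pos rfl]
          rcases HO t0 nt (Ne.symm hntprop.1) with h1 | h1
          · exact absurd h1 hntprop.2
          · exact h1
        · rw [if_neg h]
          by_contra hdot
          have h2 := hntuniq (E k) (hEne k) hdot
          rw [← hEj₀] at h2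
          exact h (hEinj h2)
      by_cases hj0 : j₀ = 0
      · -- the leaf extends the chain at the long end
        set e : Fin (ℓ''+1+1) → Fin (ℓ''+1+1) := Fin.cases t0 E with he
        have he0 : e 0 = t0 := rfl
        have hes : ∀ k, e k.succ = E k := fun k => by rw [he]; simp
        have heinj : Function.Injective e := by
          intro a b hab
          rcases Fin.eq_zero_or_eq_succ a with rfl | ⟨a', rfl⟩ <;>
            rcases Fin.eq_zero_or_eq_succ b with rfl | ⟨b', rfl⟩
          · rfl
          · rw [he0, hes] at hab; exact absurd hab.symm (hEne b')
          · rw [hes, he0] at hab; exact absurd hab (hEne a')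
          · rw [hes, hes] at hab; rw [hEinj hab]
        have hebij : Function.Bijective e := (Finite.injective_iff_bijective).mp heinj
        refine ⟨Equiv.ofBijective e hebij, ?_⟩
        intro i j
        have heOF : ∀ i, (Equiv.ofBijective e hebij) i = e i := fun i => rfl
        rw [heOF, heOF]
        have hvalzero : ∀ k : Fin (ℓ''+1), (k = j₀) ↔ ((k:ℕ) = 0) := by
          intro k
          rw [hj0]
          constructor
          · intro h; rw [h]; rfl
          · intro h; exact Fin.ext h
        rcases Fin.eq_zero_or_eq_succ i with rfl | ⟨i', rfl⟩ <;>
          rcases Fin.eq_zero_or_eq_succ j with rfl | ⟨j', rfl⟩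
        · rw [he0, hlong, gramB_zero_zero (by omega)]
        · rw [he0, hes, hdott0 j', gramB_zero_succ]
          by_cases h : j' = j₀
          · rw [if_pos h, if_pos ((hvalzero j').mp h)]
          · rw [if_neg h, if_neg (fun hh => h ((hvalzero j').mpr hh))]
        · rw [he0, hes, dotm_comm, hdott0 i', gramB_succ_zero]
          by_cases h : i' = j₀
          · rw [if_pos h, if_pos ((hvalzero i').mp h)]
          · rw [if_neg h, if_neg (fun hh => h ((hvalzero i').mpr hh))]
        · rw [hes, hes, hgram, gramB_succ_succ]
      · -- otherwise the leaf attaches in the middle : contradiction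
        exfalso
        have hj₀pos : 1 ≤ (j₀ : ℕ) := by
          rcases Nat.eq_zero_or_pos (j₀ : ℕ) with h | h
          · exact absurd (Fin.ext h) hj0
          · exact h
        have hj₀lt : (j₀ : ℕ) < ℓ''+1 := j₀.isLt
        set Z : ℕ → (Fin m → ℤ) :=
          fun a => ∑ k : Fin (ℓ''+1), (if a ≤ (k : ℕ) then (2:ℤ) else 0) • f (E k) with hZ
        have hZtop : Z (ℓ''+1) = 0 := by
          simp only [hZ]
          apply Finset.sum_eq_zero
          intro k _
          rw [if_neg (by omega : ¬ (ℓ''+1 ≤ (k:ℕ)))]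
          simp
        have hZstep : ∀ a, ∀ ha : a < ℓ''+1, Z a = (2:ℤ) • f (E ⟨a, ha⟩) + Z (a+1) := by
          intro a ha
          simp only [hZ]
          have e1 : ∀ k ∈ (Finset.univ : Finset (Fin (ℓ''+1))), (if a ≤ (k:ℕ) then (2:ℤ) else 0) • f (E k)
              = (if k = ⟨a, ha⟩ then (2:ℤ) else 0) • f (E k)
                + (if a+1 ≤ (k:ℕ) then (2:ℤ) else 0) • f (E k) := by
            intro k _
            rw [← add_smul]
            congr 1
            by_cases h : (k : ℕ) = a
            · have hk : k = ⟨a, ha⟩ := Fin.ext h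
              rw [if_pos (by omega), if_pos hk, if_neg (by omega)]
              norm_num
            · have hk : k ≠ ⟨a, ha⟩ := fun hh => h (by rw [hh])
              rw [if_neg hk]
              by_cases h2 : a ≤ (k:ℕ)
              · rw [if_pos h2, if_pos (by omega)]; norm_num
              · rw [if_neg h2, if_neg (by omega)]; norm_num
          rw [Finset.sum_congr rfl e1, Finset.sum_add_distrib, sum_ite_smulF]
        have key : ∀ d a, ∀ ha : a < ℓ''+1, ℓ''+1 = a + d + 1 →
            ((∀ i : Fin (ℓ''+1), (i:ℕ) < a →
               dotm (f (E i)) (Z a) = if (i:ℕ)+1 = a then -2 else 0)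
             ∧ dotm (Z a) (Z a) = 4) := by
          intro d
          induction d with
          | zero =>
            intro a ha hae
            have hstep := hZstep a ha
            have htop : Z (a+1) = 0 := by rw [show a+1 = ℓ''+1 by omega, hZtop]
            constructor
            · intro i hi
              rw [hstep, htop, add_zero, dotm_smul_right, hgram]
              have hne : i ≠ ⟨a, ha⟩ := by
                intro h
                rw [h] at hi
                simp only [Fin.val_mk] at hi
                omega
              rw [gramB_off i ⟨a, ha⟩ hne]
              simp only [Fin.val_mk]
              by_cases h : (i:ℕ) + 1 = a
              · rw [if_pos (Or.inl h), if_pos h]; norm_num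
              · rw [if_neg (by omega), if_neg h]; norm_num
            · rw [hstep, htop, add_zero, dotm_smul_left, dotm_smul_right, hgram, gramB_diag]
              rw [if_pos (by simp only [Fin.val_mk]; omega)]
              norm_num
          | succ d IHd =>
            intro a ha hae
            have ha1 : a + 1 < ℓ''+1 := by omega
            obtain ⟨B', A'⟩ := IHd (a+1) ha1 (by omega)
            have hstep := hZstep a ha
            constructor
            · intro i hi
              rw [hstep, dotm_add_right, dotm_smul_right, hgram]
              have hB := B' i (by omega)
              rw [if_neg (by omega : ¬ (i:ℕ)+1 = a+1)] at hB
              rw [hB, add_zero]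
              have hne : i ≠ ⟨a, ha⟩ := by
                intro h
                rw [h] at hi
                simp only [Fin.val_mk] at hi
                omega
              rw [gramB_off i ⟨a, ha⟩ hne]
              simp only [Fin.val_mk]
              by_cases h : (i:ℕ) + 1 = a
              · rw [if_pos (Or.inl h), if_pos h]; norm_num
              · rw [if_neg (by omega), if_neg h]; norm_num
            · have hFF : dotm (f (E ⟨a, ha⟩)) (f (E ⟨a, ha⟩)) = 2 := by
                rw [hgram, gramB_diag, if_neg (by simp only [Fin.val_mk]; omega)]
              have hFW : dotm (f (E ⟨a, ha⟩)) (Z (a+1)) = -2 := by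
                have h3 := B' ⟨a, ha⟩ (by simp only [Fin.val_mk]; omega)
                rwa [if_pos (by simp only [Fin.val_mk])] at h3
              have hWF : dotm (Z (a+1)) (f (E ⟨a, ha⟩)) = -2 := by
                rw [dotm_comm]; exact hFW
              rw [hstep, dotm_add_left, dotm_add_right, dotm_add_right, dotm_smul_left,
                dotm_smul_left, dotm_smul_right, dotm_smul_right, hFF, hFW, hWF, A']
              ring
        obtain ⟨Bm, Am⟩ := key (ℓ'' - (j₀:ℕ)) (j₀:ℕ) hj₀lt (by omega)
        set i₁ : Fin (ℓ''+1) := ⟨(j₀:ℕ) - 1, by omega⟩ with hi₁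
        set u := f t0 + f (E i₁) + Z (j₀:ℕ) with hu
        have hd1 : dotm (f t0) (f (E i₁)) = 0 := by
          rw [hdott0, if_neg]
          intro h
          have := congrArg (Fin.val) h
          simp only [hi₁, Fin.val_mk] at this
          omega
        have hd2 : dotm (f t0) (Z (j₀:ℕ)) = -2 := by
          simp only [hZ]
          rw [dotm_sum_right, Finset.sum_eq_single j₀]
          · rw [dotm_smul_right, hdott0, if_pos rfl, if_pos (le_refl _)]; ring
          · intro k _ hk
            rw [dotm_smul_right, hdott0, if_neg hk]
            ring
          · intro h; exact absurd (Finset.mem_univ _) h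
        have hd3 : dotm (f (E i₁)) (Z (j₀:ℕ)) = -2 := by
          have h3 := Bm i₁ (by simp only [hi₁, Fin.val_mk]; omega)
          rwa [if_pos (by simp only [hi₁, Fin.val_mk]; omega)] at h3
        have hEii : dotm (f (E i₁)) (f (E i₁)) = 2 := by
          rw [hgram, gramB_diag, if_neg (by simp only [hi₁, Fin.val_mk]; omega)]
        have huu : dotm u u = 0 := by
          rw [hu]
          simp only [dotm_add_left, dotm_add_right]
          rw [dotm_comm (f (E i₁)) (f t0), dotm_comm (Z ((j₀:ℕ))) (f t0),
            dotm_comm (Z ((j₀:ℕ))) (f (E i₁))]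
          rw [hlong, hEii, Am]
          simp only [hd1, hd2, hd3]
          ring
        have hu0 : u = 0 := dotm_self_eq_zero huu
        set ccE : Fin (ℓ''+1) → ℤ :=
          fun k => (if k = i₁ then 1 else 0) + (if (j₀:ℕ) ≤ (k:ℕ) then 2 else 0) with hccE
        have hsumE : ∑ k, ccE k • f (E k) = f (E i₁) + Z (j₀:ℕ) := by
          simp only [hccE]
          have e1 : ∀ k ∈ (Finset.univ : Finset (Fin (ℓ''+1))),
              ((if k = i₁ then (1:ℤ) else 0) + (if (j₀:ℕ) ≤ (k:ℕ) then 2 else 0)) • f (E k)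
              = (if k = i₁ then (1:ℤ) else 0) • f (E k)
                + (if (j₀:ℕ) ≤ (k:ℕ) then (2:ℤ) else 0) • f (E k) :=
            fun k _ => add_smul _ _ _
          rw [Finset.sum_congr rfl e1, Finset.sum_add_distrib, sum_ite_smulF, one_smul]
        set c : Fin (ℓ''+1+1) → ℤ :=
          Function.extend t0.succAbove (fun k' => ccE (σ'.symm k')) (fun _ => 1) with hcdef
        have hct0 : c t0 = 1 := by
          rw [hcdef, Function.extend_apply']
          rintro ⟨k', hk'⟩
          exact Fin.succAbove_ne t0 k' hk'
        have hcs : ∀ k', c (t0.succAbove k') = ccE (σ'.symm k') :=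
          fun k' => (Fin.succAbove_right_injective (p := t0)).extend_apply _ _ k'
        have hrel : ∑ jj, c jj • f jj = u := by
          rw [Fin.sum_univ_succAbove (fun jj => c jj • f jj) t0, hct0, one_smul]
          have e2 : ∑ k', c (t0.succAbove k') • f (t0.succAbove k') = ∑ k, ccE k • f (E k) := by
            rw [← Equiv.sum_comp σ' (fun k' => c (t0.succAbove k') • f (t0.succAbove k'))]
            apply Finset.sum_congr rfl
            intro k _
            rw [hcs (σ' k)]
            simp only [Equiv.symm_apply_apply]
            rfl
          rw [e2, hsumE, hu, add_assoc]
        have hfin := HI c (by rw [hrel, hu0]) t0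
        rw [hct0] at hfin
        norm_num at hfin


end Layer4

section Layer5

variable {n m : ℕ}

lemma normType1 (v : Fin m → Fin n → ℤ) {a : Fin n → ℤ} (h : IsType1 v a) :
    formV v a a = 1 := by
  obtain ⟨i, hpm, h0⟩ := h
  unfold formV
  rw [Finset.sum_eq_single i]
  · rcases hpm with h | h <;> rw [h] <;> ring
  · intro k _ hk; rw [h0 k hk]; ring
  · intro h; exact absurd (Finset.mem_univ i) h

end Layer5

/-- An irreducible subsystem of `R(V)` of rank ≥ 2 containing a simple root of
type 1 is of type B. -/
theorem stmt11 {n m : ℕ} (v : Fin m → Fin n → ℤ)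
    (hv : Module.finrank ℤ (Submodule.span ℤ (Set.range v)) = n)
    (Φ : Set (Fin n → ℤ)) (Δ : Finset (Fin n → ℤ))
    (hsub : IsRootSubsystem v (RV v) Φ) (hbase : IsBase v Φ Δ)
    (hirr : IsIrred v Φ) (hrank : 2 ≤ Δ.card)
    (hshort : ∃ a ∈ Δ, IsType1 v a) :
    IsTypeB v Δ := by
  classical
  set ℓ := Δ.card with hℓ
  set eΔ : ↥Δ ≃ Fin ℓ := Δ.equivFin with heΔ
  set av : Fin ℓ → (Fin n → ℤ) := fun i => ((eΔ.symm i : ↥Δ) : Fin n → ℤ) with hav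
  have hmem : ∀ i, av i ∈ Δ := fun i => (eΔ.symm i).2
  have havinj : Function.Injective av := by
    intro i j h
    have : eΔ.symm i = eΔ.symm j := Subtype.ext h
    exact eΔ.symm.injective this
  set f : Fin ℓ → (Fin m → ℤ) := fun i => wmap v (av i) with hf
  -- ℤ-independence of the family av
  have HIn : ∀ c : Fin ℓ → ℤ, ∑ i, c i • av i = 0 → ∀ i, c i = 0 := by
    intro c hc i
    set p : (Fin n → ℤ) → ℤ := fun x => if h : x ∈ Δ then c (eΔ ⟨x, h⟩) else 0 with hp
    have hpav : ∀ i, p (av i) = c i := by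
      intro i
      rw [hp]
      simp only [dif_pos (hmem i)]
      congr 1
      have h2 : (⟨av i, hmem i⟩ : ↥Δ) = eΔ.symm i := Subtype.ext rfl
      rw [h2, Equiv.apply_symm_apply]
    have hsum : ∑ x ∈ Δ, p x • x = ∑ i, c i • av i := by
      rw [← Finset.sum_coe_sort Δ (fun x => p x • x),
        ← Equiv.sum_comp eΔ.symm (fun x : ↥Δ => p ↑x • (↑x : Fin n → ℤ))]
      exact Finset.sum_congr rfl fun i _ => by rw [hpav i]
    have hzero : ∑ x ∈ Δ, p x • x = ∑ x ∈ Δ, (0:ℤ) • x := by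
      rw [hsum, hc]
      exact (Finset.sum_eq_zero fun x _ => by simp).symm
    have := uniqCoeff hbase.2.1 p (fun _ => (0:ℤ)) hzero (av i) (hmem i)
    rw [hpav i] at this
    exact this
  -- hypotheses of the core theorem
  have HD : ∀ i, dotm (f i) (f i) = 1 ∨ dotm (f i) (f i) = 2 := by
    intro i
    have := normRV v (hsub.1 (hbase.1 (hmem i)))
    rwa [formV_eq_dot] at this
  have HO : ∀ i j, i ≠ j → dotm (f i) (f j) = 0 ∨ dotm (f i) (f j) = -1 := by
    intro i j hij
    have hne : av i ≠ av j := fun h => hij (havinj h)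
    have hle : dotm (f i) (f j) ≤ 0 := by
      have := obtuse hsub hbase (hmem i) (hmem j) hne
      rwa [formV_eq_dot] at this
    have hge : -1 ≤ dotm (f i) (f j) := by
      by_contra hcon
      push_neg at hcon
      have h2 : dotm (f i) (f j) ≤ -2 := by omega
      have hni := HD i
      have hnj := HD j
      have hsum : dotm (f i + f j) (f i + f j)
          = dotm (f i) (f i) + dotm (f j) (f j) + 2 * dotm (f i) (f j) := by
        rw [dotm_add_left, dotm_add_right, dotm_add_right, dotm_comm (f j) (f i)]
        ring
      have hz : dotm (f i + f j) (f i + f j) = 0 := by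
        have := dotm_nonneg (f i + f j)
        omega
      have hv0 : f i + f j = 0 := dotm_self_eq_zero hz
      have hw : wmap v (av i + av j) = 0 := by
        rw [wmap_add]; exact hv0
      have hab : av i + av j = 0 := winj v hv hw
      set cx : Fin ℓ → ℤ := fun k => (if k = i then 1 else 0) + (if k = j then 1 else 0) with hcx
      have hrel : ∑ k, cx k • av k = av i + av j := by
        rw [hcx]
        have e1 : ∀ k ∈ (Finset.univ : Finset (Fin ℓ)),
            ((if k = i then (1:ℤ) else 0) + (if k = j then 1 else 0)) • av k
            = (if k = i then (1:ℤ) else 0) • av k + (if k = j then (1:ℤ) else 0) • av k :=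
          fun k _ => add_smul _ _ _
        rw [Finset.sum_congr rfl e1, Finset.sum_add_distrib, sum_ite_smulF i av 1,
          sum_ite_smulF j av 1, one_smul, one_smul]
      have := HIn cx (by rw [hrel, hab]) i
      rw [hcx] at this
      simp [hij] at this
    omega
  have HS : ∃ i, dotm (f i) (f i) = 1 := by
    obtain ⟨a, ha, hty⟩ := hshort
    refine ⟨eΔ ⟨a, ha⟩, ?_⟩
    have hava : av (eΔ ⟨a, ha⟩) = a := by
      rw [hav]
      simp only [Equiv.symm_apply_apply]
    show dotm (wmap v (av (eΔ ⟨a, ha⟩))) (wmap v (av (eΔ ⟨a, ha⟩))) = 1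
    rw [hava, ← formV_eq_dot]
    exact normType1 v hty
  have HC : ∀ S : Finset (Fin ℓ), S.Nonempty → S ≠ Finset.univ →
      ∃ i ∈ S, ∃ j, j ∉ S ∧ dotm (f i) (f j) ≠ 0 := by
    intro S' hne huniv
    by_contra hcon
    push_neg at hcon
    set S : Finset (Fin n → ℤ) := S'.image av with hSdef
    have hSsub : S ⊆ Δ := by
      intro x hx
      obtain ⟨i, _, rfl⟩ := Finset.mem_image.mp hx
      exact hmem i
    have hSne : S.Nonempty := hne.image av
    have hTne : (Δ \ S).Nonempty := by
      obtain ⟨j, hj⟩ : ∃ j, j ∉ S' := by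
        by_contra hc2; push_neg at hc2
        exact huniv (Finset.eq_univ_iff_forall.mpr hc2)
      refine ⟨av j, Finset.mem_sdiff.mpr ⟨hmem j, ?_⟩⟩
      intro hj2
      obtain ⟨i, hi, hie⟩ := Finset.mem_image.mp hj2
      exact hj (havinj hie ▸ hi)
    have horth : ∀ a ∈ S, ∀ b ∈ Δ \ S, formV v a b = 0 := by
      intro a ha b hb
      obtain ⟨i, hi, rfl⟩ := Finset.mem_image.mp ha
      have hbΔ := (Finset.mem_sdiff.mp hb).1
      have hbS := (Finset.mem_sdiff.mp hb).2
      set jb : Fin ℓ := eΔ ⟨b, hbΔ⟩ with hjb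
      have havb : av jb = b := by
        rw [hav, hjb]
        simp only [Equiv.symm_apply_apply]
      have hjbS : jb ∉ S' := by
        intro h
        exact hbS (Finset.mem_image.mpr ⟨jb, h, havb⟩)
      have h5 := hcon i hi jb hjbS
      rw [formV_eq_dot, ← havb]
      exact h5
    exact nosplitD hv hsub hbase hirr S hSsub hSne hTne horth
  have HIf : ∀ c : Fin ℓ → ℤ, ∑ i, c i • f i = 0 → ∀ i, c i = 0 := by
    intro c hc
    have hw : wmap v (∑ i, c i • av i) = 0 := by
      rw [wmap_sum]
      rw [← hc]
      exact Finset.sum_congr rfl fun i _ => wmap_smul v (c i) (av i)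
    exact HIn c (winj v hv hw)
  obtain ⟨σ, hσ⟩ := coreB ℓ f HIf HD HO HS HC
  refine ⟨ℓ, ⟨fun i => av (σ i), ?_, ?_, ?_, ?_⟩⟩
  · exact fun a b h => σ.injective (havinj h)
  · exact fun i => hmem (σ i)
  · intro a ha
    refine ⟨σ.symm (eΔ ⟨a, ha⟩), ?_⟩
    simp only [Equiv.apply_symm_apply]
    rw [hav]
    simp only [Equiv.symm_apply_apply]
  · intro i j
    rw [formV_eq_dot]
    exact hσ i j
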